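/- For the one-dimensional free Meixner family φ_{c,b} and the Belinschi–Nica transformation B_t(μ) = (μ^{⊞(1+t)})^{⊎(1/(1+t))}, one has on the level of Jacobi parameters: if μ has Jacobi parameters β = (0, b, b, b, ...), γ = (1, 1+c, 1+c, ...), then B_t(μ) has Jacobi parameters β = (0, b, b, ...), γ = (1, 1+t+c, 1+t+c, ...); in particular B_t(φ_{c,b}) = φ_{c+t,b}. -/

import Mathlib

open PowerSeries Finset

/-- Formal composition `F(V)` of power series, valid when `V` has zero constant term. -/
noncomputable def pcomp (F V : PowerSeries ℂ) : PowerSeries ℂ :=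
  PowerSeries.mk fun n =>
    ∑ k ∈ Finset.range (n + 1), PowerSeries.coeff k F * PowerSeries.coeff n (V ^ k)

lemma coeff_pcomp (F V : PowerSeries ℂ) (n : ℕ) :
    coeff n (pcomp F V) = ∑ k ∈ range (n+1), coeff k F * coeff n (V ^ k) := by
  simp [pcomp]

lemma coeff_pow_eq_zero {V : PowerSeries ℂ} (hV : constantCoeff V = 0)
    {n k : ℕ} (h : n < k) : coeff n (V ^ k) = 0 :=
  X_pow_dvd_iff.mp (pow_dvd_pow_of_dvd (X_dvd_iff.mpr hV) k) n h

lemma pcomp_C {V : PowerSeries ℂ} (a : ℂ) : pcomp (C a) V = C a := by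
  ext n
  rw [coeff_pcomp]
  rw [Finset.sum_eq_single 0]
  · simp [coeff_C]
  · intro k _ hk; simp [coeff_C, hk]
  · simp

lemma pcomp_one {V : PowerSeries ℂ} : pcomp 1 V = 1 := by
  have := pcomp_C (V := V) 1; simpa using this

lemma pcomp_X {V : PowerSeries ℂ} (hV : constantCoeff V = 0) : pcomp X V = V := by
  ext n
  rw [coeff_pcomp]
  cases n with
  | zero => simpa [coeff_X] using hV.symm
  | succ m =>
    rw [Finset.sum_eq_single 1]
    · simp [coeff_X]
    · intro k _ hk; simp [coeff_X, hk]
    · intro h; exact absurd (Finset.mem_range.mpr (by omega)) h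

lemma pcomp_add (F G V : PowerSeries ℂ) :
    pcomp (F + G) V = pcomp F V + pcomp G V := by
  ext n
  simp [coeff_pcomp, add_mul, Finset.sum_add_distrib]

lemma pcomp_smul (a : ℂ) (F V : PowerSeries ℂ) :
    pcomp (a • F) V = a • pcomp F V := by
  ext n
  simp [coeff_pcomp, Finset.mul_sum, mul_assoc]

lemma pcomp_mul {V : PowerSeries ℂ} (hV : constantCoeff V = 0) (F G : PowerSeries ℂ) :
    pcomp (F * G) V = pcomp F V * pcomp G V := by
  ext n
  set f : ℕ × ℕ → ℂ := fun p => coeff p.1 F * coeff p.2 G * coeff n (V ^ (p.1 + p.2)) with hf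
  have key : ∀ s : Finset (ℕ × ℕ), s = (range (n+1) ×ˢ range (n+1)).filter
      (fun p => p.1 + p.2 ≤ n) → True := fun _ _ => trivial
  -- LHS
  have hL : coeff n (pcomp (F * G) V)
      = ∑ k ∈ range (n+1), ∑ p ∈ antidiagonal k, f p := by
    rw [coeff_pcomp]
    refine Finset.sum_congr rfl fun k _ => ?_
    rw [PowerSeries.coeff_mul, Finset.sum_mul]
    refine Finset.sum_congr rfl fun p hp => ?_
    rw [hf]
    simp only []
    rw [Finset.HasAntidiagonal.mem_antidiagonal.mp hp]
  have hbi : (range (n+1)).biUnion (fun k => antidiagonal k)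
      = (range (n+1) ×ˢ range (n+1)).filter (fun p => p.1 + p.2 ≤ n) := by
    ext p
    simp only [Finset.mem_biUnion, Finset.mem_range, Finset.HasAntidiagonal.mem_antidiagonal,
      Finset.mem_filter, Finset.mem_product]
    constructor
    · rintro ⟨k, hk, rfl⟩; omega
    · rintro ⟨⟨h1, h2⟩, h3⟩; exact ⟨p.1 + p.2, by omega, rfl⟩
  have hdisj : ∀ k₁ ∈ range (n+1), ∀ k₂ ∈ range (n+1), k₁ ≠ k₂ →
      Disjoint (antidiagonal k₁) (antidiagonal k₂) := by
    intro k₁ _ k₂ _ hne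
    rw [Finset.disjoint_left]
    intro p h1 h2
    rw [Finset.HasAntidiagonal.mem_antidiagonal] at h1 h2
    exact hne (h1 ▸ h2)
  have hL2 : coeff n (pcomp (F * G) V)
      = ∑ p ∈ (range (n+1) ×ˢ range (n+1)).filter (fun p => p.1 + p.2 ≤ n), f p := by
    rw [hL, ← hbi, Finset.sum_biUnion hdisj]
  -- remove filter
  have hL3 : coeff n (pcomp (F * G) V) = ∑ p ∈ range (n+1) ×ˢ range (n+1), f p := by
    rw [hL2]
    refine Finset.sum_filter_of_ne fun p hp hne => ?_
    by_contra h
    exact hne (by rw [hf]; simp only []; rw [coeff_pow_eq_zero hV (by omega), mul_zero])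
  -- RHS
  have hR : coeff n (pcomp F V * pcomp G V) = ∑ p ∈ range (n+1) ×ˢ range (n+1), f p := by
    rw [PowerSeries.coeff_mul]
    have e1 : ∀ p ∈ antidiagonal n,
        coeff p.1 (pcomp F V) * coeff p.2 (pcomp G V)
        = ∑ i ∈ range (n+1), ∑ j ∈ range (n+1),
            coeff i F * coeff p.1 (V^i) * (coeff j G * coeff p.2 (V^j)) := by
      intro p hp
      have hp' := Finset.HasAntidiagonal.mem_antidiagonal.mp hp
      rw [coeff_pcomp, coeff_pcomp]
      rw [Finset.sum_subset (Finset.range_subset_range.mpr (by omega : p.1 + 1 ≤ n + 1))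
          (fun i _ hi => by
            rw [coeff_pow_eq_zero hV (by simpa using hi), mul_zero]),
        Finset.sum_subset (Finset.range_subset_range.mpr (by omega : p.2 + 1 ≤ n + 1))
          (fun j _ hj => by
            rw [coeff_pow_eq_zero hV (by simpa using hj), mul_zero]),
        Finset.sum_mul_sum]
    rw [Finset.sum_congr rfl e1, Finset.sum_comm, Finset.sum_product]
    refine Finset.sum_congr rfl fun i _ => ?_
    rw [Finset.sum_comm]
    refine Finset.sum_congr rfl fun j _ => ?_
    have : f (i, j) = coeff i F * coeff j G * coeff n (V ^ i * V ^ j) := by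
      simp only [hf, pow_add]
    rw [this, PowerSeries.coeff_mul, Finset.mul_sum]
    refine Finset.sum_congr rfl fun p _ => ?_
    ring
  rw [hL3, hR]

lemma coeff_pow_self {V : PowerSeries ℂ} (hV : constantCoeff V = 0) (n : ℕ) :
    coeff n (V ^ n) = (coeff 1 V) ^ n := by
  have hXW : V = X * PowerSeries.mk (fun i => coeff (i+1) V) := by
    ext m
    cases m with
    | zero => simpa using hV
    | succ m => rw [coeff_succ_X_mul, coeff_mk]
  calc coeff n (V ^ n) = coeff (0 + n) (X ^ n * (PowerSeries.mk (fun i => coeff (i+1) V)) ^ n) := by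
        rw [← mul_pow, ← hXW, zero_add]
      _ = coeff 0 ((PowerSeries.mk (fun i => coeff (i+1) V)) ^ n) := coeff_X_pow_mul _ n 0
      _ = (coeff 1 V) ^ n := by
        rw [coeff_zero_eq_constantCoeff_apply, map_pow]
        congr 1

lemma pcomp_injective {V : PowerSeries ℂ} (hV : constantCoeff V = 0)
    (hV1 : coeff 1 V ≠ 0) {F G : PowerSeries ℂ} (h : pcomp F V = pcomp G V) : F = G := by
  by_contra hne
  have hD : F - G ≠ 0 := sub_ne_zero.mpr hne
  have hex : ∃ n, coeff n (F - G) ≠ 0 := by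
    by_contra hc
    push_neg at hc
    exact hD (PowerSeries.ext fun n => by simpa using hc n)
  classical
  let d := Nat.find hex
  have hd : coeff d (F - G) ≠ 0 := Nat.find_spec hex
  have hmin : ∀ m < d, coeff m (F - G) = 0 := fun m hm => by
    by_contra hc; exact absurd (Nat.find_le hc) (not_le.mpr hm)
  have h0 : pcomp (F - G) V = 0 := by
    have := pcomp_add (F - G) G V
    rw [sub_add_cancel, h] at this
    exact right_eq_add.mp this
  have : coeff d (pcomp (F - G) V) = coeff d (F - G) * (coeff 1 V) ^ d := by
    rw [coeff_pcomp, Finset.sum_eq_single d]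
    · rw [coeff_pow_self hV]
    · intro k hk hkne
      have hklt : k < d := lt_of_le_of_ne (Nat.lt_succ_iff.mp (Finset.mem_range.mp hk)) hkne
      rw [hmin k hklt, zero_mul]
    · intro hd'; exact absurd (Finset.mem_range.mpr (by omega)) hd'
  rw [h0, map_zero] at this
  exact (mul_ne_zero hd (pow_ne_zero d hV1)) this.symm

lemma coeff_one_mul_eq_zero {A B : PowerSeries ℂ} (hA : constantCoeff A = 0)
    (hB : constantCoeff B = 0) : coeff 1 (A * B) = 0 := by
  have h2 : (X : PowerSeries ℂ)^2 ∣ A * B := by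
    rw [pow_two]; exact mul_dvd_mul (X_dvd_iff.mpr hA) (X_dvd_iff.mpr hB)
  exact X_pow_dvd_iff.mp h2 1 one_lt_two

lemma hxc (a : ℂ) (Z : PowerSeries ℂ) (m : ℕ) :
    coeff (m+1) (C a * X * Z) = a * coeff m Z := by
  rw [mul_assoc, coeff_C_mul, coeff_succ_X_mul]

lemma hx2c (a : ℂ) (Z : PowerSeries ℂ) (m : ℕ) :
    coeff (m+2) (C a * X^2 * Z) = a * coeff m Z := by
  rw [mul_assoc, coeff_C_mul, coeff_X_pow_mul]

lemma hx2c1 (a : ℂ) (Z : PowerSeries ℂ) :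
    coeff 1 (C a * X^2 * Z) = 0 := by
  rw [mul_assoc, coeff_C_mul, pow_two, mul_assoc, coeff_succ_X_mul,
    coeff_zero_eq_constantCoeff_apply]
  simp

/-- Belinschi–Nica transformation on the free Meixner family `φ_{c,b}`.
If `F` witnesses the continued-fraction (Jacobi parameter) expansion of the moment series
of `φ_{c,b}` with parameters `β = (0, b, b, …)`, `γ = (1, 1+c, 1+c, …)`, `R` is its free
cumulant series (`R(z(1+M)) = M`, `1 + M = F 0`), `M₂` the moment series of the free power
`μ^{⊞(1+t)}` (so `(1+t)R(z(1+M₂)) = M₂`), then `B_t(μ) = (μ^{⊞(1+t)})^{⊎(1/(1+t))}`, whose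
moment series is `(1 - (1+t)⁻¹ η₂)⁻¹`, has Jacobi parameters `β = (0, b, b, …)`,
`γ = (1, 1+t+c, 1+t+c, …)`; in particular `B_t(φ_{c,b}) = φ_{c+t,b}`. -/
theorem stmt_19 (b c : ℂ) (t : ℝ) (ht : 0 ≤ t) (F : ℕ → PowerSeries ℂ)
    (hF : ∀ k, F k * (1 - PowerSeries.C (if k = 0 then 0 else b) * PowerSeries.X
        - PowerSeries.C (if k = 0 then 1 else 1 + c) * PowerSeries.X ^ 2 * F (k + 1)) = 1)
    (R M₂ : PowerSeries ℂ)
    (hR0 : PowerSeries.constantCoeff R = 0)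
    (hM₂0 : PowerSeries.constantCoeff M₂ = 0)
    (hR : pcomp R (PowerSeries.X * F 0) = F 0 - 1)
    (hR2 : pcomp ((1 + (t : ℂ)) • R) (PowerSeries.X * (1 + M₂)) = M₂) :
    ∃ F' : ℕ → PowerSeries ℂ,
      (∀ k, F' k * (1 - PowerSeries.C (if k = 0 then 0 else b) * PowerSeries.X
          - PowerSeries.C (if k = 0 then 1 else 1 + (t : ℂ) + c) * PowerSeries.X ^ 2
            * F' (k + 1)) = 1) ∧
      F' 0 = (1 - (1 + (t : ℂ))⁻¹ • (1 - (1 + M₂)⁻¹))⁻¹ := by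
  classical
  set s : ℂ := 1 + (t : ℂ) with hs_def
  have hs : s ≠ 0 := by
    have h1 : (0:ℝ) < 1 + t := by linarith
    have h2 : s = ((1 + t : ℝ) : ℂ) := by rw [hs_def]; push_cast; ring
    rw [h2]
    exact_mod_cast ne_of_gt h1
  -- constant coefficients of F k are 1
  have hc0 : ∀ k, constantCoeff (F k) = 1 := by
    intro k
    have h := congrArg (constantCoeff) (hF k)
    simpa using h
  -- recursion for tails
  have hFrec : ∀ j, F (j+1) = 1 + C b * X * F (j+1)
      + C (1+c) * X^2 * (F (j+2) * F (j+1)) := by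
    intro j
    have h := hF (j+1)
    rw [if_neg (Nat.succ_ne_zero j), if_neg (Nat.succ_ne_zero j)] at h
    linear_combination h
  -- all tails are equal
  have heq : ∀ n, ∀ j, coeff n (F (j+1)) = coeff n (F 1) := by
    intro n
    induction n using Nat.strong_induction_on with
    | _ n IH =>
      obtain _ | n := n
      · intro j
        rw [coeff_zero_eq_constantCoeff_apply, coeff_zero_eq_constantCoeff_apply, hc0, hc0]
      obtain _ | m := n
      · -- n = 1
        have comp : ∀ j, coeff 1 (F (j+1)) = b := by
          intro j
          have e := congrArg (coeff 1) (hFrec j)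
          rw [map_add, map_add, hxc, hx2c1, coeff_zero_eq_constantCoeff_apply, hc0] at e
          simpa [coeff_one] using e
        intro j
        exact (comp j).trans (comp 0).symm
      · -- n = m+2
        intro j
        have e : ∀ i, coeff (m+2) (F (i+1)) = b * coeff (m+1) (F (i+1))
            + (1+c) * coeff m (F (i+2) * F (i+1)) := by
          intro i
          have e := congrArg (coeff (m+2)) (hFrec i)
          rw [map_add, map_add, hxc, hx2c] at e
          simpa [coeff_one] using e
        have hprod : ∀ i, coeff m (F (i+2) * F (i+1)) = coeff m (F 1 * F 1) := by
          intro i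
          rw [PowerSeries.coeff_mul, PowerSeries.coeff_mul]
          refine Finset.sum_congr rfl fun p hp => ?_
          have hp' := Finset.HasAntidiagonal.mem_antidiagonal.mp hp
          rw [IH p.1 (by omega) (i+1), IH p.2 (by omega) i]
        rw [e j, e 0, IH (m+1) (by omega) j, IH (m+1) (by omega) 0, hprod j, hprod 0]
  have hF2 : F (1+1) = F 1 := PowerSeries.ext fun n => heq n 1
  -- quadratic equation for the tail
  have hq1 : F 1 * (1 - C b * X - (1 + C c) * X^2 * F 1) = 1 := by
    have h := hF 1
    rw [if_neg one_ne_zero, if_neg one_ne_zero, hF2, map_add, map_one] at h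
    exact h
  -- equation for F 0
  have hF0 : F 0 * (1 - X^2 * F 1) = 1 := by
    have h := hF 0
    rw [if_pos rfl, if_pos rfl, map_zero, map_one, zero_mul, sub_zero, one_mul] at h
    exact h
  -- moment series quadratic
  have heta : F 0 - 1 = X^2 * (F 1 * F 0) := by linear_combination hF0
  have hMQ : F 0 - 1 = X^2*(F 0 * F 0) + C b * ((X * F 0) * (F 0 - 1))
      + C c * ((F 0 - 1)*(F 0 - 1)) := by
    linear_combination (X^2*(F 0 * F 0)) * hq1
      + (F 0 - C b * X * F 0 - 2*(1 + C c)*(F 0 - 1)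
          + (1 + C c)*(F 0 - 1 - X^2*(F 1 * F 0))) * heta
  -- the R-transform quadratic
  have hV0 : constantCoeff (X * F 0) = 0 := by simp
  have hV1 : coeff 1 (X * F 0) ≠ 0 := by
    rw [coeff_succ_X_mul, coeff_zero_eq_constantCoeff_apply, hc0]
    exact one_ne_zero
  have hcomp : pcomp (X*X + C b * (X * R) + C c * (R * R)) (X * F 0)
      = pcomp R (X * F 0) := by
    rw [pcomp_add, pcomp_add, pcomp_mul hV0, pcomp_mul hV0, pcomp_mul hV0, pcomp_mul hV0,
        pcomp_mul hV0, pcomp_C, pcomp_C, pcomp_X hV0, hR]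
    linear_combination -hMQ
  have RQ : R = X*X + C b * (X * R) + C c * (R * R) :=
    (pcomp_injective hV0 hV1 hcomp).symm
  -- pass to the free power
  set w : PowerSeries ℂ := 1 + M₂ with hw_def
  have hw0 : constantCoeff w = 1 := by simp [hw_def, hM₂0]
  have hwu : w * w⁻¹ = 1 := PowerSeries.mul_inv_cancel w (by rw [hw0]; exact one_ne_zero)
  have hV₂0 : constantCoeff (X * w) = 0 := by simp
  set S : PowerSeries ℂ := pcomp R (X * w) with hS_def
  have hM' : C s * S = w - 1 := by
    rw [pcomp_smul, smul_eq_C_mul] at hR2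
    rw [hR2, hw_def]
    ring
  have hS : S = (X*w)*(X*w) + C b * ((X*w) * S) + C c * (S * S) := by
    have h := congrArg (fun P => pcomp P (X * w)) RQ
    rw [pcomp_add, pcomp_add, pcomp_mul hV₂0, pcomp_mul hV₂0, pcomp_mul hV₂0,
        pcomp_mul hV₂0, pcomp_mul hV₂0, pcomp_C, pcomp_C, pcomp_X hV₂0] at h
    exact h
  -- S is divisible by X^2
  have hS0' : constantCoeff S = 0 := by
    have h := congrArg (constantCoeff) hM'
    rw [map_mul, constantCoeff_C, map_sub, map_one, hw0, sub_self] at h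
    exact (mul_eq_zero.mp h).resolve_left hs
  have hS1 : coeff 1 S = 0 := by
    have h := congrArg (coeff 1) hS
    rw [map_add, map_add, coeff_one_mul_eq_zero hV₂0 hV₂0] at h
    rw [coeff_C_mul, coeff_C_mul, coeff_one_mul_eq_zero hV₂0 hS0',
      coeff_one_mul_eq_zero hS0' hS0'] at h
    simpa using h
  have hdvd : (X : PowerSeries ℂ)^2 ∣ S := by
    rw [X_pow_dvd_iff]
    intro m hm
    interval_cases m
    · rw [coeff_zero_eq_constantCoeff_apply]; exact hS0'
    · exact hS1
  obtain ⟨g, hSg⟩ := hdvd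
  -- core quadratic for S * w
  have hcore : S * w = X^2*(w*w) + C b * (X*(S*w)) + (C s + C c) * (S*S) := by
    linear_combination hS - S * hM'
  -- substitute S = X^2 g and cancel X^2
  have hX2 : (X : PowerSeries ℂ)^2 * (g*w)
      = X^2 * (w*w + C b * (X*(g*w)) + (C s + C c) * (X^2*(g*g))) := by
    linear_combination hcore - (w - C b * X * w - (C s + C c)*(X^2*g + S)) * hSg
  have hgq : g*w = w*w + C b * (X*(g*w)) + (C s + C c) * (X^2*(g*g)) :=
    mul_left_cancel₀ (pow_ne_zero 2 PowerSeries.X_ne_zero) hX2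
  -- quadratic for h = g * w⁻¹
  have hhq : g*w⁻¹ = 1 + C b * (X*(g*w⁻¹))
      + (C s + C c) * (X^2*((g*w⁻¹)*(g*w⁻¹))) := by
    linear_combination (w⁻¹*w⁻¹) * hgq
      + (w*w⁻¹ + 1 + C b * (X*(g*w⁻¹)) - g*w⁻¹) * hwu
  -- the key identity
  have hkey : C s * (X^2 * (g * w⁻¹)) = 1 - w⁻¹ := by
    linear_combination w⁻¹ * hM' - C s * w⁻¹ * hSg + hwu
  have hsmul : s⁻¹ • ((1 : PowerSeries ℂ) - w⁻¹) = X^2 * (g * w⁻¹) := by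
    rw [← hkey, ← smul_eq_C_mul, smul_smul, inv_mul_cancel₀ hs, one_smul]
  -- construct the witness
  refine ⟨fun k => if k = 0 then (1 - s⁻¹ • ((1 : PowerSeries ℂ) - w⁻¹))⁻¹ else g * w⁻¹,
    fun k => ?_, by simp⟩
  rcases k with _ | k
  · -- k = 0
    show (1 - s⁻¹ • ((1 : PowerSeries ℂ) - w⁻¹))⁻¹
        * (1 - C (0:ℂ) * X - C (1:ℂ) * X^2 * (g * w⁻¹)) = 1
    have hinv := PowerSeries.inv_mul_cancel
      ((1:PowerSeries ℂ) - s⁻¹ • ((1 : PowerSeries ℂ) - w⁻¹))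
      (by rw [hsmul]
          simp [map_sub, map_one, map_mul, map_pow, constantCoeff_X])
    rw [hsmul] at hinv
    rw [hsmul, map_zero, map_one]
    linear_combination hinv
  · -- k ≥ 1
    show (g * w⁻¹) * (1 - C b * X - C (s + c) * X^2 * (g * w⁻¹)) = 1
    rw [map_add]
    linear_combination hhq
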